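/- Consider the system ẋ = x(1+ax-3hy+3kz), ẏ = y(-2-2hy-2kz), ż = z(1+hy+kz) (Case 9 of (1:-2:1)-resonance: b=-3h, c=3k, d=g=0, e=-2h, f=-2k). Then ℓ = ax(1+(k/2)z) - ahxy + (1+hy+kz)² satisfies X(ℓ) = (ax-4hy+2kz)·ℓ, and φ₁ = x²y·ℓ^{-2} and φ₂ = yz² are first integrals of X. -/

import Mathlib

lemma dpoly (c0 c1 c2 p : ℝ) :
    HasDerivAt (fun t : ℝ => c0 + c1*t + c2*t^2) (c1 + 2*c2*p) p := by
  have h := ((hasDerivAt_const p c0).add ((hasDerivAt_id p).const_mul c1)).add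
    ((hasDerivAt_pow 2 p).const_mul c2)
  refine h.congr_deriv ?_
  push_cast; ring

lemma dpoly' (c0 c1 c2 p : ℝ) :
    deriv (fun t : ℝ => c0 + c1*t + c2*t^2) p = c1 + 2*c2*p :=
  (dpoly c0 c1 c2 p).deriv

lemma dquot (c0 c1 c2 e0 e1 e2 p : ℝ) (h : e0 + e1*p + e2*p^2 ≠ 0) :
    deriv (fun t : ℝ => (c0 + c1*t + c2*t^2) / (e0 + e1*t + e2*t^2)^2) p =
      ((c1 + 2*c2*p) * ((e0+e1*p+e2*p^2)^2)
        - (c0+c1*p+c2*p^2) * (2 * (e0+e1*p+e2*p^2) * (e1+2*e2*p)))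
        / ((e0+e1*p+e2*p^2)^2)^2 := by
  have hg2 := (dpoly e0 e1 e2 p).fun_pow 2
  have := ((dpoly c0 c1 c2 p).fun_div hg2 (pow_ne_zero 2 h)).deriv
  rw [this]
  push_cast; ring

theorem stmt13 (a h k : ℝ) :
    ∀ x y z : ℝ,
      ((x*(1 + a*x - 3*h*y + 3*k*z)) *
          deriv (fun t => a*t*(1 + (k/2)*z) - a*h*t*y + (1 + h*y + k*z)^2) x
        + (y*(-2 - 2*h*y - 2*k*z)) *
          deriv (fun t => a*x*(1 + (k/2)*z) - a*h*x*t + (1 + h*t + k*z)^2) y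
        + (z*(1 + h*y + k*z)) *
          deriv (fun t => a*x*(1 + (k/2)*t) - a*h*x*y + (1 + h*y + k*t)^2) z
        = (a*x - 4*h*y + 2*k*z) *
            (a*x*(1 + (k/2)*z) - a*h*x*y + (1 + h*y + k*z)^2))
      ∧
      (a*x*(1 + (k/2)*z) - a*h*x*y + (1 + h*y + k*z)^2 ≠ 0 →
        (x*(1 + a*x - 3*h*y + 3*k*z)) *
            deriv (fun t => t^2 * y
              / (a*t*(1 + (k/2)*z) - a*h*t*y + (1 + h*y + k*z)^2)^2) x
          + (y*(-2 - 2*h*y - 2*k*z)) *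
            deriv (fun t => x^2 * t
              / (a*x*(1 + (k/2)*z) - a*h*x*t + (1 + h*t + k*z)^2)^2) y
          + (z*(1 + h*y + k*z)) *
            deriv (fun t => x^2 * y
              / (a*x*(1 + (k/2)*t) - a*h*x*y + (1 + h*y + k*t)^2)^2) z = 0)
      ∧
      ((x*(1 + a*x - 3*h*y + 3*k*z)) * deriv (fun t => y * z^2) x
        + (y*(-2 - 2*h*y - 2*k*z)) * deriv (fun t => t * z^2) y
        + (z*(1 + h*y + k*z)) * deriv (fun t => y * t^2) z = 0) := by
  intro x y z
  refine ⟨?_, ?_, ?_⟩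
  · rw [show (fun t => a*t*(1 + (k/2)*z) - a*h*t*y + (1 + h*y + k*z)^2)
        = fun t : ℝ => ((1+h*y+k*z)^2) + (a*(1+(k/2)*z) - a*h*y)*t + 0*t^2 from by
          funext t; ring,
      show (fun t => a*x*(1 + (k/2)*z) - a*h*x*t + (1 + h*t + k*z)^2)
        = fun t : ℝ => (a*x*(1+(k/2)*z) + (1+k*z)^2) + (-(a*h*x) + 2*h*(1+k*z))*t + h^2*t^2 from by
          funext t; ring,
      show (fun t => a*x*(1 + (k/2)*t) - a*h*x*y + (1 + h*y + k*t)^2)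
        = fun t : ℝ => (a*x - a*h*x*y + (1+h*y)^2) + (a*x*(k/2) + 2*k*(1+h*y))*t + k^2*t^2 from by
          funext t; ring,
      dpoly', dpoly', dpoly']
    ring
  · intro hL
    have hx : ((1+h*y+k*z)^2) + (a*(1+(k/2)*z) - a*h*y)*x + 0*x^2 ≠ 0 :=
      fun hc => hL (by linear_combination hc)
    have hy : (a*x*(1+(k/2)*z) + (1+k*z)^2) + (-(a*h*x) + 2*h*(1+k*z))*y + h^2*y^2 ≠ 0 :=
      fun hc => hL (by linear_combination hc)
    have hz : (a*x - a*h*x*y + (1+h*y)^2) + (a*x*(k/2) + 2*k*(1+h*y))*z + k^2*z^2 ≠ 0 :=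
      fun hc => hL (by linear_combination hc)
    rw [show (fun t => t^2 * y / (a*t*(1 + (k/2)*z) - a*h*t*y + (1 + h*y + k*z)^2)^2)
        = fun t : ℝ => (0 + 0*t + y*t^2)
            / (((1+h*y+k*z)^2) + (a*(1+(k/2)*z) - a*h*y)*t + 0*t^2)^2 from by
          funext t; ring_nf,
      show (fun t => x^2 * t / (a*x*(1 + (k/2)*z) - a*h*x*t + (1 + h*t + k*z)^2)^2)
        = fun t : ℝ => (0 + x^2*t + 0*t^2)
            / ((a*x*(1+(k/2)*z) + (1+k*z)^2) + (-(a*h*x) + 2*h*(1+k*z))*t + h^2*t^2)^2 from by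
          funext t; ring_nf,
      show (fun t => x^2 * y / (a*x*(1 + (k/2)*t) - a*h*x*y + (1 + h*y + k*t)^2)^2)
        = fun t : ℝ => (x^2*y + 0*t + 0*t^2)
            / ((a*x - a*h*x*y + (1+h*y)^2) + (a*x*(k/2) + 2*k*(1+h*y))*t + k^2*t^2)^2 from by
          funext t; ring_nf,
      dquot _ _ _ _ _ _ _ hx, dquot _ _ _ _ _ _ _ hy, dquot _ _ _ _ _ _ _ hz]
    ring
  · rw [show (fun _ : ℝ => y * z^2) = fun t : ℝ => (y*z^2) + 0*t + 0*t^2 from by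
        funext t; ring,
      show (fun t : ℝ => t * z^2) = fun t : ℝ => 0 + z^2*t + 0*t^2 from by
        funext t; ring,
      show (fun t : ℝ => y * t^2) = fun t : ℝ => 0 + 0*t + y*t^2 from by
        funext t; ring,
      dpoly', dpoly', dpoly']
    ring
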